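/- For all positive integers m, n, the function h(x) = sin x satisfies the Sturm–Liouville equation −σ(x)·d/dx(σ(x)·dh/dx) + 2m²·h(x) = 2·ρ(x)·h(x) for all real x, i.e. sin x is a solution of the associated periodic Sturm–Liouville problem with parameter l = m and eigenvalue λ = 2. -/

import Mathlib

open Real

/-- `σ(x) = √(m² + 4mn + n² − (m² − n²)cos 2x)`. -/
noncomputable def sigmaMN (m n : ℕ) (x : ℝ) : ℝ :=
  Real.sqrt ((m : ℝ) ^ 2 + 4 * m * n + n ^ 2 - ((m : ℝ) ^ 2 - n ^ 2) * Real.cos (2 * x))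

/-- `ρ(x) = (m+n)(m+n − (m−n)cos 2x)`. -/
noncomputable def rhoMN (m n : ℕ) (x : ℝ) : ℝ :=
  ((m : ℝ) + n) * ((m : ℝ) + n - ((m : ℝ) - n) * Real.cos (2 * x))

/-- `h(x) = sin x` solves the associated periodic Sturm–Liouville problem
`−σ(x)·d/dx(σ(x)·dh/dx) + 2l²·h = λ·ρ(x)·h` with parameter `l = m` and eigenvalue `λ = 2`. -/
theorem sin_solves_sturm_liouville (m n : ℕ) (hm : 0 < m) (hn : 0 < n) (x : ℝ) :
    -(sigmaMN m n x * deriv (fun t : ℝ => sigmaMN m n t * deriv Real.sin t) x) +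
      2 * (m : ℝ) ^ 2 * Real.sin x = 2 * rhoMN m n x * Real.sin x := by
  have hm1 : (1:ℝ) ≤ m := by exact_mod_cast hm
  have hn1 : (1:ℝ) ≤ n := by exact_mod_cast hn
  have hSpos : ∀ t : ℝ,
      0 < (m : ℝ) ^ 2 + 4 * m * n + n ^ 2 - ((m : ℝ) ^ 2 - n ^ 2) * Real.cos (2 * t) := by
    intro t
    have h1 : Real.cos (2 * t) ≤ 1 := Real.cos_le_one _
    have h2 : -1 ≤ Real.cos (2 * t) := Real.neg_one_le_cos _
    nlinarith [mul_nonneg (sub_nonneg.2 h1) (sq_nonneg (m : ℝ)),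
      mul_nonneg (by linarith : (0:ℝ) ≤ 1 + Real.cos (2 * t)) (sq_nonneg (n : ℝ)),
      mul_pos (by linarith : (0:ℝ) < (m:ℝ)) (by linarith : (0:ℝ) < (n:ℝ))]
  have hfun : (fun t : ℝ => sigmaMN m n t * deriv Real.sin t)
      = fun t : ℝ => sigmaMN m n t * Real.cos t := by
    funext t; rw [Real.deriv_sin]
  have hS : HasDerivAt
      (fun t : ℝ => (m : ℝ) ^ 2 + 4 * m * n + n ^ 2 - ((m : ℝ) ^ 2 - n ^ 2) * Real.cos (2 * t))
      (((m : ℝ) ^ 2 - n ^ 2) * (Real.sin (2 * x) * 2)) x := by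
    have h1 : HasDerivAt (fun t : ℝ => 2 * t) 2 x := by
      simpa using (hasDerivAt_id x).const_mul (2:ℝ)
    have h2 : HasDerivAt (fun t : ℝ => Real.cos (2 * t)) (-Real.sin (2 * x) * 2) x :=
      (Real.hasDerivAt_cos (2 * x)).comp x h1
    have h3 := (hasDerivAt_const x ((m : ℝ) ^ 2 + 4 * m * n + n ^ 2)).sub (h2.const_mul ((m : ℝ) ^ 2 - n ^ 2))
    exact h3.congr_deriv (by ring)
  have hsqrt : HasDerivAt (fun t : ℝ => sigmaMN m n t)
      ((((m : ℝ) ^ 2 - n ^ 2) * (Real.sin (2 * x) * 2)) / (2 * sigmaMN m n x)) x := by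
    unfold sigmaMN
    exact hS.sqrt (ne_of_gt (hSpos x))
  have hprod := hsqrt.mul (Real.hasDerivAt_cos x)
  rw [hfun, HasDerivAt.deriv (f := fun t => sigmaMN m n t * Real.cos t) hprod]
  have hs0 : sigmaMN m n x ≠ 0 := by
    unfold sigmaMN
    exact ne_of_gt (Real.sqrt_pos.2 (hSpos x))
  have hs2 : sigmaMN m n x * sigmaMN m n x
      = (m : ℝ) ^ 2 + 4 * m * n + n ^ 2 - ((m : ℝ) ^ 2 - n ^ 2) * Real.cos (2 * x) :=
    Real.mul_self_sqrt (le_of_lt (hSpos x))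
  have key : sigmaMN m n x *
      ((((m : ℝ) ^ 2 - n ^ 2) * (Real.sin (2 * x) * 2)) / (2 * sigmaMN m n x) * Real.cos x
        + sigmaMN m n x * -Real.sin x)
      = ((m : ℝ) ^ 2 - n ^ 2) * Real.sin (2 * x) * Real.cos x
        - (sigmaMN m n x * sigmaMN m n x) * Real.sin x := by
    field_simp
    ring
  rw [key, hs2, rhoMN, Real.sin_two_mul, Real.cos_two_mul]
  ring
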